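/- Let A ⊆ ℂ be an open annulus containing the unit circle, let g : A → ℂ be analytic and injective with g'(ζ) ≠ 0 for every ζ on the unit circle, so that Γ = g(unit circle) is an analytic Jordan curve. Let w : ℂ → ℝ be continuous and strictly positive on Γ, and let μ be the finite positive Borel measure on Γ defined by ∫ f dμ = ∫₀^{2π} f(g(e^{iθ})) · w(g(e^{iθ})) · |g'(e^{iθ})| dθ for every bounded Borel function f. Then P²(μ) ≠ L²(μ). -/

import Mathlib

open MeasureTheory

/-- `P²(μ)`: the closure in `L²(μ)` of the set of (classes of) polynomial functions. -/
def Psq (μ : Measure ℂ) : Set (Lp ℂ 2 μ) :=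
  closure {f : Lp ℂ 2 μ | ∃ p : Polynomial ℂ, (f : ℂ → ℂ) =ᵐ[μ] fun z => p.eval z}

set_option maxHeartbeats 1000000 in
/-- let `A ⊆ ℂ` be an open annulus (open set) containing the unit circle,
`g : A → ℂ` analytic and injective with `g' ≠ 0` on the unit circle, so that
`Γ = g(unit circle)` is an analytic Jordan curve; let `w` be a continuous strictly
positive weight on `Γ`, and let `μ` be the weighted arc-length measure on `Γ`:
`∫ f dμ = ∫₀^{2π} f(g(e^{iθ})) · w(g(e^{iθ})) · |g'(e^{iθ})| dθ` for every bounded Borel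
`f`.  Then `P²(μ) ≠ L²(μ)`. -/
theorem psq_ne_lsq_of_analytic_curve (A : Set ℂ) (hA : IsOpen A)
    (hcirc : Metric.sphere (0 : ℂ) 1 ⊆ A)
    (g : ℂ → ℂ) (hg : AnalyticOnNhd ℂ g A) (hginj : Set.InjOn g A)
    (hg' : ∀ ζ ∈ Metric.sphere (0 : ℂ) 1, deriv g ζ ≠ 0)
    (w : ℂ → ℝ) (hw_cont : ContinuousOn w (g '' Metric.sphere (0 : ℂ) 1))
    (hw_pos : ∀ z ∈ g '' Metric.sphere (0 : ℂ) 1, 0 < w z)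
    (μ : Measure ℂ) [IsFiniteMeasure μ]
    (hμ : ∀ f : ℂ → ℂ, Measurable f → (∃ C : ℝ, ∀ z, ‖f z‖ ≤ C) →
      ∫ z, f z ∂μ = ∫ θ in (0 : ℝ)..(2 * Real.pi),
        f (g (Complex.exp (θ * Complex.I))) *
          ((w (g (Complex.exp (θ * Complex.I))) *
            ‖deriv g (Complex.exp (θ * Complex.I))‖ : ℝ) : ℂ)) :
    Psq μ ≠ Set.univ := by
  classical
  -- basic objects
  set Γ : Set ℂ := g '' Metric.sphere (0:ℂ) 1 with hΓdef
  have hgc : ContinuousOn g A := hg.continuousOn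
  have hΓcomp : IsCompact Γ := (isCompact_sphere 0 1).image_of_continuousOn (hgc.mono hcirc)
  have hΓmeas : MeasurableSet Γ := hΓcomp.isClosed.measurableSet
  set c : ℝ → ℂ := fun θ => Complex.exp (θ * Complex.I) with hcdef
  have hc_mem : ∀ θ : ℝ, c θ ∈ Metric.sphere (0:ℂ) 1 := by
    intro θ
    simp [hcdef, Metric.mem_sphere, Complex.dist_eq, Complex.norm_exp_ofReal_mul_I]
  have hc_cont : Continuous c := by
    exact Complex.continuous_exp.comp (Complex.continuous_ofReal.mul continuous_const)
  have hderiv_cont : ContinuousOn (deriv g) A := hg.deriv.continuousOn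
  set φ : ℝ → ℂ := fun θ => g (c θ) with hφdef
  have hφ_mem : ∀ θ, φ θ ∈ Γ := fun θ => Set.mem_image_of_mem g (hc_mem θ)
  have hφ_cont : Continuous φ := hgc.comp_continuous hc_cont fun θ => hcirc (hc_mem θ)
  set G : ℝ → ℂ := fun θ => deriv g (c θ) * (c θ * Complex.I) with hGdef
  have hdc_cont : Continuous fun θ => deriv g (c θ) :=
    hderiv_cont.comp_continuous hc_cont fun θ => hcirc (hc_mem θ)
  have hG_cont : Continuous G := hdc_cont.mul (hc_cont.mul continuous_const)
  have hG_ne : ∀ θ, G θ ≠ 0 := by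
    intro θ
    exact mul_ne_zero (hg' _ (hc_mem θ))
      (mul_ne_zero (Complex.exp_ne_zero _) Complex.I_ne_zero)
  set u : ℝ → ℝ := fun θ => w (φ θ) * ‖deriv g (c θ)‖ with hudef
  have hu_cont : Continuous u :=
    (hw_cont.comp_continuous hφ_cont hφ_mem).mul (continuous_norm.comp hdc_cont)
  have hu_pos : ∀ θ, 0 < u θ :=
    fun θ => mul_pos (hw_pos _ (hφ_mem θ)) (norm_pos_iff.mpr (hg' _ (hc_mem θ)))
  -- restated hμ
  have hμ' : ∀ f : ℂ → ℂ, Measurable f → (∃ C : ℝ, ∀ z, ‖f z‖ ≤ C) →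
      ∫ z, f z ∂μ = ∫ θ in (0 : ℝ)..(2 * Real.pi), f (φ θ) * ((u θ : ℝ) : ℂ) := by
    intro f hf hb
    exact hμ f hf hb
  -- the inverse homeomorphism
  haveI : CompactSpace (Metric.sphere (0:ℂ) 1) :=
    isCompact_iff_compactSpace.mp (isCompact_sphere 0 1)
  set eqv : (Metric.sphere (0:ℂ) 1) ≃ Γ :=
    Equiv.Set.imageOfInjOn g _ (hginj.mono hcirc) with heqv
  have heqv_cont : Continuous eqv := by
    refine Continuous.subtype_mk ?_ _
    exact hgc.comp_continuous continuous_subtype_val fun x => hcirc x.2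
  set homeo := heqv_cont.homeoOfEquivCompactToT2 with hhomeo
  set ψ : ℂ → ℂ := fun z => if h : z ∈ Γ then (homeo.symm ⟨z, h⟩ : ℂ) else 1 with hψdef
  have hψΓ : ∀ ζ ∈ Metric.sphere (0:ℂ) 1, ψ (g ζ) = ζ := by
    intro ζ hζ
    have hm : g ζ ∈ Γ := Set.mem_image_of_mem g hζ
    have h1 : homeo.symm ⟨g ζ, hm⟩ = ⟨ζ, hζ⟩ := by
      have h0 : homeo ⟨ζ, hζ⟩ = ⟨g ζ, hm⟩ := rfl
      rw [← h0, Homeomorph.symm_apply_apply]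
    simp only [hψdef, dif_pos hm, h1]
  have hψ_cont : ContinuousOn ψ Γ := by
    rw [continuousOn_iff_continuous_restrict]
    have hres : Γ.domRestrict ψ = fun z : Γ => (homeo.symm z : ℂ) := by
      funext z
      simp only [Set.domRestrict_apply, hψdef, dif_pos z.2]
    rw [hres]
    exact continuous_subtype_val.comp homeo.symm.continuous
  have hψ_mem : ∀ z ∈ Γ, ψ z ∈ Metric.sphere (0:ℂ) 1 := by
    intro z hz
    simp only [hψdef, dif_pos hz]
    exact (homeo.symm ⟨z, hz⟩).2
  -- the function H and its truncation F
  set H : ℂ → ℂ := fun z => (starRingEnd ℂ) (deriv g (ψ z) * (ψ z * Complex.I)) /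
      ((w z * ‖deriv g (ψ z)‖ : ℝ) : ℂ) with hHdef
  have hdψ_cont : ContinuousOn (fun z => deriv g (ψ z)) Γ :=
    hderiv_cont.comp hψ_cont fun z hz => hcirc (hψ_mem z hz)
  have hH_cont : ContinuousOn H Γ := by
    apply ContinuousOn.div
    · exact Complex.continuous_conj.comp_continuousOn
        (hdψ_cont.mul (hψ_cont.mul continuousOn_const))
    · exact Complex.continuous_ofReal.comp_continuousOn
        (hw_cont.mul (continuous_norm.comp_continuousOn hdψ_cont))
    · intro z hz
      have h1 : 0 < w z := hw_pos z hz
      have h2 : (0:ℝ) < ‖deriv g (ψ z)‖ :=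
        norm_pos_iff.mpr (hg' _ (hψ_mem z hz))
      simp only [ne_eq, Complex.ofReal_eq_zero]
      positivity
  set F : ℂ → ℂ := Γ.piecewise H 0 with hFdef
  have hF_meas : Measurable F :=
    ContinuousOn.measurable_piecewise hH_cont continuousOn_const hΓmeas
  obtain ⟨CH, hCH⟩ := hΓcomp.exists_bound_of_continuousOn hH_cont
  have hF_bd : ∀ z, ‖F z‖ ≤ CH := by
    intro z
    by_cases hz : z ∈ Γ
    · rw [hFdef, Set.piecewise_eq_of_mem _ _ _ hz]
      simpa using hCH z hz
    · rw [hFdef, Set.piecewise_eq_of_notMem _ _ _ hz]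
      have := (norm_nonneg (H (φ 0))).trans (hCH _ (hφ_mem 0))
      simpa using this
  -- key pointwise identity
  have hFφH : ∀ θ, F (φ θ) = H (φ θ) := fun θ => Set.piecewise_eq_of_mem _ _ _ (hφ_mem θ)
  have hFφ : ∀ θ, F (φ θ) * G θ = ((Complex.normSq (G θ) / u θ : ℝ) : ℂ) := by
    intro θ
    have hψφ : ψ (φ θ) = c θ := hψΓ _ (hc_mem θ)
    rw [hFφH θ, hHdef]
    simp only [hψφ]
    rw [div_mul_eq_mul_div, mul_comm _ (G θ)]
    rw [show (starRingEnd ℂ) (deriv g (c θ) * (c θ * Complex.I)) = (starRingEnd ℂ) (G θ) from rfl]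
    rw [Complex.mul_conj, Complex.ofReal_div]
  have hFφ_cont : Continuous fun θ => F (φ θ) := by
    have : (fun θ => F (φ θ)) = fun θ => H (φ θ) := funext hFφH
    rw [this]
    exact hH_cont.comp_continuous hφ_cont hφ_mem
  -- positive constants
  set c₁ : ℝ := ∫ θ in (0:ℝ)..(2*Real.pi), Complex.normSq (G θ) / u θ with hc₁def
  have hGu_cont : Continuous fun θ => Complex.normSq (G θ) / u θ :=
    (Complex.continuous_normSq.comp hG_cont).div hu_cont fun θ => (hu_pos θ).ne'
  have hc₁_pos : 0 < c₁ := by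
    rw [hc₁def]
    refine intervalIntegral.intervalIntegral_pos_of_pos_on (hGu_cont.intervalIntegrable _ _) ?_ (by positivity)
    intro θ _
    exact div_pos (Complex.normSq_pos.mpr (hG_ne θ)) (hu_pos θ)
  set M : ℝ := ∫ θ in (0:ℝ)..(2*Real.pi), u θ with hMdef
  have hM_pos : 0 < M :=
    intervalIntegral.intervalIntegral_pos_of_pos_on (hu_cont.intervalIntegrable _ _)
      (fun θ _ => hu_pos θ) (by positivity)
  obtain ⟨K, hK⟩ := (isCompact_Icc (a := (0:ℝ)) (b := 2*Real.pi)).exists_bound_of_continuousOn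
    ((continuous_norm.comp hG_cont).div hu_cont fun θ => (hu_pos θ).ne').continuousOn
  have hKbd : ∀ θ ∈ Set.Icc (0:ℝ) (2*Real.pi), ‖G θ‖ ≤ K * u θ := by
    intro θ hθ
    have h1 := hK θ hθ
    rw [Real.norm_eq_abs] at h1
    have h2 : ‖G θ‖ / u θ ≤ K := (le_abs_self _).trans h1
    have h3 := mul_le_mul_of_nonneg_right h2 (hu_pos θ).le
    rwa [div_mul_cancel₀ _ (hu_pos θ).ne'] at h3
  have hK_pos : 0 < K := by
    have h0 : (0:ℝ) ∈ Set.Icc (0:ℝ) (2*Real.pi) := ⟨le_refl _, by positivity⟩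
    have h1 : 0 < ‖G 0‖ / u 0 :=
      div_pos (norm_pos_iff.mpr (hG_ne 0)) (hu_pos 0)
    have h2 := hK 0 h0
    rw [Real.norm_eq_abs] at h2
    have h3 := (le_abs_self _).trans h2
    simp only [Pi.div_apply, Function.comp_apply] at h3
    linarith
  -- the measure lives on Γ
  have hae : ∀ᵐ z ∂μ, z ∈ Γ := by
    have hind := hμ' (Γᶜ.indicator fun _ => (1:ℂ))
      (measurable_const.indicator hΓmeas.compl)
      ⟨1, by
        intro z
        by_cases hz : z ∈ Γᶜ <;> simp [Set.indicator_apply, hz]⟩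
    rw [integral_indicator_const _ hΓmeas.compl] at hind
    have hz0 : ∀ θ ∈ Set.uIcc (0:ℝ) (2*Real.pi),
        Γᶜ.indicator (fun _ => (1:ℂ)) (φ θ) * ((u θ : ℝ) : ℂ) = 0 := by
      intro θ _
      rw [Set.indicator_of_notMem (by simpa using hφ_mem θ), zero_mul]
    rw [intervalIntegral.integral_congr hz0, intervalIntegral.integral_zero] at hind
    have htr : (μ Γᶜ).toReal = 0 :=
      (smul_eq_zero.mp hind).resolve_right one_ne_zero
    have hμΓ : μ Γᶜ = 0 := by
      have := measure_ne_top μ Γᶜ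
      exact (ENNReal.toReal_eq_zero_iff _).mp htr |>.resolve_right this
    rw [ae_iff]
    simpa [Set.compl_def] using hμΓ
  -- derivative of the parametrization
  have hφd : ∀ θ : ℝ, HasDerivAt φ (G θ) θ := by
    intro θ
    have h1 : HasDerivAt c (c θ * Complex.I) θ := by
      have h0 := hasDerivAt_circleMap 0 1 θ
      have hcm : circleMap 0 1 = c := by
        funext t
        simp [circleMap, hcdef]
      rw [hcm] at h0
      simpa [circleMap, hcdef] using h0
    have h2 : HasDerivAt g (deriv g (c θ)) (c θ) :=
      (hg _ (hcirc (hc_mem θ))).differentiableAt.hasDerivAt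
    exact h2.comp θ h1
  -- monomials integrate to zero against G
  have hmono : ∀ n : ℕ, (∫ θ in (0:ℝ)..(2*Real.pi), (φ θ)^n * G θ) = 0 := by
    intro n
    have hd : ∀ θ ∈ Set.uIcc (0:ℝ) (2*Real.pi),
        HasDerivAt (fun t => (φ t)^(n+1) / ((n:ℂ)+1)) ((φ θ)^n * G θ) θ := by
      intro θ _
      have hne : ((n:ℂ)+1) ≠ 0 := Nat.cast_add_one_ne_zero n
      have hz : HasDerivAt (fun z : ℂ => z^(n+1)) (((n:ℂ)+1) * (φ θ)^n) (φ θ) := by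
        simpa using hasDerivAt_pow (n+1) (φ θ)
      have h := (hz.comp θ (hφd θ)).div_const ((n:ℂ)+1)
      rw [show (φ θ)^n * G θ = ((n:ℂ)+1) * (φ θ)^n * G θ / ((n:ℂ)+1) by
        rw [eq_div_iff hne]; ring]
      exact h
    have hint : IntervalIntegrable (fun θ => (φ θ)^n * G θ)
        MeasureTheory.volume 0 (2*Real.pi) :=
      ((hφ_cont.pow n).mul hG_cont).intervalIntegrable _ _
    rw [intervalIntegral.integral_eq_sub_of_hasDerivAt hd hint]
    have hper : φ (2*Real.pi) = φ 0 := by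
      have : c (2*Real.pi) = c 0 := by
        simp only [hcdef]
        push_cast
        rw [Complex.exp_two_pi_mul_I]
        simp
      simp only [hφdef, this]
    rw [hper, sub_self]
  -- polynomials integrate to zero against G
  have hpoly : ∀ p : Polynomial ℂ,
      (∫ θ in (0:ℝ)..(2*Real.pi), (p.eval (φ θ)) * G θ) = 0 := by
    intro p
    have hrew : ∀ θ ∈ Set.uIcc (0:ℝ) (2*Real.pi), p.eval (φ θ) * G θ =
        ∑ i ∈ Finset.range (p.natDegree + 1), p.coeff i * ((φ θ)^i * G θ) := by
      intro θ _
      rw [Polynomial.eval_eq_sum_range, Finset.sum_mul]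
      simp [mul_assoc]
    rw [intervalIntegral.integral_congr hrew,
      intervalIntegral.integral_finset_sum]
    · refine Finset.sum_eq_zero fun i _ => ?_
      rw [intervalIntegral.integral_const_mul, hmono i, mul_zero]
    · intro i _
      exact (continuous_const.mul ((hφ_cont.pow i).mul hG_cont)).intervalIntegrable _ _
  -- the value of the functional at F
  have hIF : (∫ θ in (0:ℝ)..(2*Real.pi), F (φ θ) * G θ) = (c₁ : ℂ) := by
    rw [hc₁def, ← intervalIntegral.integral_ofReal]
    exact intervalIntegral.integral_congr fun θ _ => hFφ θ
  -- F as an element of L²(μ)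
  have hF_mem : MemLp F 2 μ := by
    refine MemLp.of_bound hF_meas.aestronglyMeasurable CH (Filter.Eventually.of_forall ?_)
    intro z
    exact hF_bd z
  set FL : Lp ℂ 2 μ := hF_mem.toLp F with hFLdef
  set δ : ℝ := Real.sqrt (c₁^2/(K^2*M)) with hδdef
  have hδsq_pos : 0 < c₁^2/(K^2*M) := div_pos (pow_pos hc₁_pos 2) (by positivity)
  have hδ_pos : 0 < δ := Real.sqrt_pos.mpr hδsq_pos
  intro hcon
  have hmem : FL ∈ closure {f : Lp ℂ 2 μ | ∃ p : Polynomial ℂ,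
      (f : ℂ → ℂ) =ᵐ[μ] fun z => p.eval z} := by
    have : FL ∈ Psq μ := by rw [hcon]; exact Set.mem_univ _
    exact this
  obtain ⟨q, hqS, hqd⟩ := Metric.mem_closure_iff.mp hmem δ hδ_pos
  obtain ⟨p, hp⟩ := hqS
  -- the difference function
  have hp_cont : Continuous fun z : ℂ => p.eval z := p.continuous
  obtain ⟨CP, hCP⟩ := hΓcomp.exists_bound_of_continuousOn hp_cont.continuousOn
  set fd : ℂ → ℂ := fun z => F z - p.eval z with hfddef
  have hfd_meas : Measurable fd := hF_meas.sub hp_cont.measurable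
  have hfdφ_cont : Continuous fun θ => fd (φ θ) := hFφ_cont.sub (hp_cont.comp hφ_cont)
  set sθ : ℝ := ∫ θ in (0:ℝ)..(2*Real.pi), ‖fd (φ θ)‖^2 * u θ with hsθdef
  -- transfer the L² mass to the parametrization
  have hs_eq : (∫ z, ‖fd z‖^2 ∂μ) = sθ := by
    have hbd : ∀ z : ℂ, ‖(Γ.indicator fun z => ((‖fd z‖^2 : ℝ) : ℂ)) z‖
        ≤ (CH + CP)^2 := by
      intro z
      by_cases hz : z ∈ Γ
      · rw [Set.indicator_of_mem hz, Complex.norm_of_nonneg (by positivity)]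
        have hb : ‖fd z‖ ≤ CH + CP := by
          calc ‖fd z‖ ≤ ‖F z‖ + ‖p.eval z‖ := norm_sub_le _ _
            _ ≤ CH + CP := add_le_add
                (by exact hF_bd z) (hCP z hz)
        exact pow_le_pow_left₀ (norm_nonneg _) hb 2
      · rw [Set.indicator_of_notMem hz]
        have : (0:ℝ) ≤ (CH + CP)^2 := by positivity
        simpa using this
    have hind := hμ' (Γ.indicator fun z => ((‖fd z‖^2 : ℝ) : ℂ))
      ((Complex.measurable_ofReal.comp (hfd_meas.norm.pow_const 2)).indicator hΓmeas)
      ⟨(CH + CP)^2, hbd⟩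
    have hL : (∫ z, (Γ.indicator fun z => ((‖fd z‖^2 : ℝ) : ℂ)) z ∂μ)
        = (((∫ z, ‖fd z‖^2 ∂μ) : ℝ) : ℂ) := by
      have hcongr : (∫ z, (Γ.indicator fun z => ((‖fd z‖^2 : ℝ) : ℂ)) z ∂μ)
          = ∫ z, ((‖fd z‖^2 : ℝ) : ℂ) ∂μ := by
        apply integral_congr_ae
        filter_upwards [hae] with z hz
        rw [Set.indicator_of_mem hz]
      rw [hcongr]
      exact integral_ofReal (𝕜 := ℂ)
    have hR : (∫ θ in (0:ℝ)..(2*Real.pi),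
        (Γ.indicator fun z => ((‖fd z‖^2 : ℝ) : ℂ)) (φ θ) * ((u θ : ℝ) : ℂ))
        = ((sθ : ℝ) : ℂ) := by
      rw [hsθdef, ← intervalIntegral.integral_ofReal]
      apply intervalIntegral.integral_congr
      intro θ _
      simp only [Set.indicator_of_mem (hφ_mem θ), Complex.ofReal_mul]
    rw [hL, hR] at hind
    exact_mod_cast hind
  -- the functional does not vanish on fd
  have hIdiff : (∫ θ in (0:ℝ)..(2*Real.pi), fd (φ θ) * G θ) = (c₁ : ℂ) := by
    have hsplit : ∀ θ ∈ Set.uIcc (0:ℝ) (2*Real.pi),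
        fd (φ θ) * G θ = F (φ θ) * G θ - p.eval (φ θ) * G θ :=
      fun θ _ => sub_mul _ _ _
    have hcont2 : Continuous fun θ => p.eval (φ θ) * G θ := by
      exact (hp_cont.comp hφ_cont).mul hG_cont
    rw [intervalIntegral.integral_congr hsplit,
      intervalIntegral.integral_sub (f := fun θ => F (φ θ) * G θ)
        ((hFφ_cont.mul hG_cont).intervalIntegrable _ _)
        (hcont2.intervalIntegrable _ _),
      hIF, hpoly p, sub_zero]
  -- weighted Cauchy–Schwarz via AM-GM with parameter t
  set t : ℝ := K*M/c₁ with htdef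
  have ht_pos : 0 < t := by positivity
  have hstep1 : c₁ ≤ ∫ θ in (0:ℝ)..(2*Real.pi), ‖fd (φ θ) * G θ‖ := by
    have h1 : c₁ = ‖∫ θ in (0:ℝ)..(2*Real.pi), fd (φ θ) * G θ‖ := by
      rw [hIdiff, Complex.norm_of_nonneg hc₁_pos.le]
    rw [h1]
    exact intervalIntegral.norm_integral_le_integral_norm (by positivity)
  have hint1 : IntervalIntegrable (fun θ => ‖fd (φ θ) * G θ‖)
      MeasureTheory.volume 0 (2*Real.pi) :=
    (hfdφ_cont.mul hG_cont).norm.intervalIntegrable _ _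
  have hint2 : IntervalIntegrable
      (fun θ => (K*t/2) * (‖fd (φ θ)‖^2 * u θ) + (K/(2*t)) * u θ)
      MeasureTheory.volume 0 (2*Real.pi) :=
    ((continuous_const.mul ((hfdφ_cont.norm.pow 2).mul hu_cont)).add
      (continuous_const.mul hu_cont)).intervalIntegrable _ _
  have hstep2 : (∫ θ in (0:ℝ)..(2*Real.pi), ‖fd (φ θ) * G θ‖)
      ≤ ∫ θ in (0:ℝ)..(2*Real.pi),
          ((K*t/2) * (‖fd (φ θ)‖^2 * u θ) + (K/(2*t)) * u θ) := by
    refine intervalIntegral.integral_mono_on (by positivity) hint1 hint2 ?_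
    intro θ hθ
    have hGb := hKbd θ hθ
    have ha : (0:ℝ) ≤ ‖fd (φ θ)‖ := norm_nonneg _
    have hu := hu_pos θ
    have e1 : ‖fd (φ θ)‖ * ‖G θ‖ ≤ ‖fd (φ θ)‖ * (K * u θ) :=
      mul_le_mul_of_nonneg_left hGb ha
    have e2 : ‖fd (φ θ)‖ ≤ t/2 * ‖fd (φ θ)‖^2 + 1/(2*t) := by
      have key : t/2 * ‖fd (φ θ)‖^2 + 1/(2*t) - ‖fd (φ θ)‖
          = (t*‖fd (φ θ)‖ - 1)^2/(2*t) := by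
        field_simp
        ring
      have h := div_nonneg (sq_nonneg (t*‖fd (φ θ)‖ - 1)) (by positivity : (0:ℝ) ≤ 2*t)
      linarith [key.le, key.ge, h]
    have e3 : ‖fd (φ θ)‖ * (K * u θ)
        ≤ (t/2 * ‖fd (φ θ)‖^2 + 1/(2*t)) * (K * u θ) :=
      mul_le_mul_of_nonneg_right e2 (by positivity)
    have e4 : (t/2 * ‖fd (φ θ)‖^2 + 1/(2*t)) * (K * u θ)
        = (K*t/2) * (‖fd (φ θ)‖^2 * u θ) + (K/(2*t)) * u θ := by
      ring
    rw [norm_mul]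
    linarith [e1, e3, e4.le, e4.ge]
  have hstep3 : (∫ θ in (0:ℝ)..(2*Real.pi),
      ((K*t/2) * (‖fd (φ θ)‖^2 * u θ) + (K/(2*t)) * u θ))
      = (K*t/2) * sθ + (K/(2*t)) * M := by
    rw [intervalIntegral.integral_add (f := fun θ => (K*t/2) * (‖fd (φ θ)‖^2 * u θ))
        (g := fun θ => (K/(2*t)) * u θ)
        ((continuous_const.mul ((hfdφ_cont.norm.pow 2).mul hu_cont)).intervalIntegrable _ _)
        ((continuous_const.mul hu_cont).intervalIntegrable _ _),
      intervalIntegral.integral_const_mul, intervalIntegral.integral_const_mul]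
  have hmaster : c₁ ≤ (K*t/2) * sθ + (K/(2*t)) * M := by
    rw [← hstep3]
    exact hstep1.trans hstep2
  -- deduce the lower bound on sθ
  have hsθ_lb : c₁^2/(K^2*M) ≤ sθ := by
    have e1 : K*t/2 = K^2*M/(2*c₁) := by
      rw [htdef]
      field_simp
    have e2 : (K/(2*t)) * M = c₁/2 := by
      rw [htdef]
      field_simp
    rw [e1, e2] at hmaster
    have h6 : c₁/2 ≤ K^2*M/(2*c₁) * sθ := by linarith
    rw [div_le_iff₀ (by positivity : (0:ℝ) < K^2*M)]
    have h7 := mul_le_mul_of_nonneg_right h6 (by positivity : (0:ℝ) ≤ 2*c₁)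
    have h8 : K^2*M/(2*c₁)*sθ*(2*c₁) = K^2*M*sθ := by field_simp
    rw [h8] at h7
    nlinarith [h7]
  have hsθ_nonneg : 0 ≤ sθ := le_trans hδsq_pos.le hsθ_lb
  -- compute the distance
  have hp_mem : MemLp (fun z => p.eval z) 2 μ := by
    refine MemLp.of_bound hp_cont.aestronglyMeasurable CP ?_
    filter_upwards [hae] with z hz using hCP z hz
  have hfd_mem : MemLp fd 2 μ := hF_mem.sub hp_mem
  have hsub_ae : ⇑(FL - q) =ᵐ[μ] fd := by
    have h1 : ⇑(FL - q) =ᵐ[μ] ⇑FL - ⇑q := Lp.coeFn_sub FL q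
    have h2 : ⇑FL =ᵐ[μ] F := hF_mem.coeFn_toLp
    filter_upwards [h1, h2, hp] with z e1 e2 e3
    rw [e1, Pi.sub_apply, e2, e3, hfddef]
  have hnorm : ‖FL - q‖ = sθ ^ (2⁻¹ : ℝ) := by
    rw [Lp.norm_def, eLpNorm_congr_ae hsub_ae,
      hfd_mem.eLpNorm_eq_integral_rpow_norm (by norm_num) (by norm_num)]
    rw [ENNReal.toReal_ofReal (by positivity)]
    congr 1
    rw [ENNReal.toReal_ofNat]
    rw [show (∫ z, ‖fd z‖ ^ (2:ℝ) ∂μ) = ∫ z, ‖fd z‖^2 ∂μ from by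
      apply integral_congr_ae
      filter_upwards with z
      rw [show ((2:ℝ) = ((2:ℕ):ℝ)) from by norm_num, Real.rpow_natCast]]
    rw [hs_eq]
  have hdist : δ ≤ dist FL q := by
    rw [dist_eq_norm, hnorm]
    have : δ ≤ Real.sqrt sθ := by
      rw [hδdef]
      exact Real.sqrt_le_sqrt hsθ_lb
    rwa [Real.sqrt_eq_rpow, one_div] at this
  linarith [hdist, hqd]
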